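/- Let p ≥ 2, β > 0, h > 0, and define φ_p(x) = E[tanh²(β·(p/2)^{1/2}·x^{(p−1)/2}·Y + h)] for x ∈ [0,1], where Y is a standard Gaussian. If β²·p(p−1)/2 < 1 (in particular if 8p²β²·exp(16β²p) ≤ 1/2), then the equation q = φ_p(q) has a unique solution q in [0,1]. -/

import Mathlib

open MeasureTheory ProbabilityTheory Real
open scoped NNReal ENNReal

noncomputable def Ttanh (w : ℝ) : ℝ := Real.tanh w * (1 - Real.tanh w ^ 2)

noncomputable def gtanh (h b : ℝ) : ℝ := Real.tanh (b + h) ^ 2 + Real.tanh (h - b) ^ 2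


lemma my_hasDerivAt_tanh (x : ℝ) : HasDerivAt Real.tanh (1 - Real.tanh x ^ 2) x := by
  have hc : Real.cosh x ≠ 0 := (Real.cosh_pos x).ne'
  have h : HasDerivAt (fun y => Real.sinh y / Real.cosh y)
      ((Real.cosh x * Real.cosh x - Real.sinh x * Real.sinh x) / Real.cosh x ^ 2) x :=
    (Real.hasDerivAt_sinh x).div (Real.hasDerivAt_cosh x) hc
  have heq : (Real.cosh x * Real.cosh x - Real.sinh x * Real.sinh x) / Real.cosh x ^ 2
      = 1 - Real.tanh x ^ 2 := by
    rw [Real.tanh_eq_sinh_div_cosh, div_pow]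
    field_simp
  have h2 : HasDerivAt (fun y => Real.sinh y / Real.cosh y) (1 - Real.tanh x ^ 2) x := heq ▸ h
  exact h2.congr_of_eventuallyEq (Filter.Eventually.of_forall fun y => Real.tanh_eq_sinh_div_cosh y)

lemma my_tanh_sq_lt_one (x : ℝ) : Real.tanh x ^ 2 < 1 := by
  have hc := Real.cosh_pos x
  have hs := Real.cosh_sq x
  rw [Real.tanh_eq_sinh_div_cosh, div_pow]
  rw [div_lt_one (by positivity)]
  nlinarith

lemma my_T_lip (u v : ℝ) : |Ttanh u - Ttanh v| ≤ |u - v| := by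
  set T : ℝ → ℝ := Ttanh with hT
  have hTdef : ∀ w, T w = Real.tanh w * (1 - Real.tanh w ^ 2) := fun w => rfl
  have hderiv : ∀ w : ℝ, HasDerivAt T ((1 - Real.tanh w ^ 2) * (1 - 3 * Real.tanh w ^ 2)) w := by
    intro w
    have h1 := my_hasDerivAt_tanh w
    have h2 := (h1.mul ((hasDerivAt_const w (1:ℝ)).sub (h1.pow 2)))
    have : HasDerivAt (fun w => Real.tanh w * (1 - Real.tanh w ^ 2))
        ((1 - Real.tanh w ^ 2) * (1 - 3 * Real.tanh w ^ 2)) w := by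
      convert h2 using 1
      · rfl
      · rfl
      · rfl
      · simp
        ring
    exact this
  have hbound : ∀ w : ℝ, ‖deriv T w‖ ≤ 1 := by
    intro w
    rw [(hderiv w).deriv]
    have h1 : Real.tanh w ^ 2 < 1 := my_tanh_sq_lt_one w
    have h2 : 0 ≤ Real.tanh w ^ 2 := sq_nonneg _
    rw [Real.norm_eq_abs, abs_le]
    constructor <;> nlinarith
  have := Convex.norm_image_sub_le_of_norm_deriv_le
    (fun x _ => (hderiv x).differentiableAt) (fun x _ => hbound x) convex_univ
    (Set.mem_univ v) (Set.mem_univ u)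
  simpa using this





lemma gtanh_hasDerivAt (h b : ℝ) :
    HasDerivAt (gtanh h) (2 * (Ttanh (b + h) - Ttanh (h - b))) b := by
  have h1 : HasDerivAt (fun b : ℝ => Real.tanh (b + h)) (1 - Real.tanh (b + h) ^ 2) b := by
    simpa [Function.comp_def] using (my_hasDerivAt_tanh (b + h)).comp b ((hasDerivAt_id b).add_const h)
  have h2 : HasDerivAt (fun b : ℝ => Real.tanh (h - b)) (-(1 - Real.tanh (h - b) ^ 2)) b := by
    simpa [Function.comp_def] using (my_hasDerivAt_tanh (h - b)).comp b ((hasDerivAt_id b).const_sub h)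
  have := (h1.pow 2).add (h2.pow 2)
  convert this using 1
  · rfl
  · rfl
  · rfl
  · simp [Ttanh]
    ring

lemma gtanh_deriv_bound (h b : ℝ) : |deriv (gtanh h) b| ≤ 4 * |b| := by
  rw [(gtanh_hasDerivAt h b).deriv]
  have := my_T_lip (b + h) (h - b)
  have h2 : |(b + h) - (h - b)| = 2 * |b| := by
    rw [show (b + h) - (h - b) = 2 * b by ring, abs_mul]
    norm_num
  rw [abs_mul, abs_two]
  calc 2 * |Ttanh (b + h) - Ttanh (h - b)| ≤ 2 * (2 * |b|) := by
        rw [← h2]; linarith [my_T_lip (b + h) (h - b)]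
    _ = 4 * |b| := by ring

lemma gtanh_two_point_nonneg (h : ℝ) {b b' : ℝ} (hb' : 0 ≤ b') (hbb : b' ≤ b) :
    |gtanh h b - gtanh h b'| ≤ 2 * b ^ 2 - 2 * b' ^ 2 := by
  have hdiffg : ∀ x : ℝ, DifferentiableAt ℝ (gtanh h) x :=
    fun x => (gtanh_hasDerivAt h x).differentiableAt
  have key : ∀ (s : ℝ), s = 1 ∨ s = -1 →
      MonotoneOn (fun b => 2 * b ^ 2 + s * gtanh h b) (Set.Ici 0) := by
    intro s hs
    have hdiffF : Differentiable ℝ (fun b : ℝ => 2 * b ^ 2 + s * gtanh h b) := by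
      intro x
      exact (((differentiableAt_pow 2).const_mul 2).add ((hdiffg x).const_mul s))
    apply monotoneOn_of_deriv_nonneg (convex_Ici 0)
    · exact hdiffF.continuous.continuousOn
    · intro x hx
      exact (hdiffF x).differentiableWithinAt
    · intro x hx
      rw [interior_Ici] at hx
      have hx0 : 0 < x := hx
      rw [deriv_fun_add (((differentiableAt_pow 2).const_mul 2)) ((hdiffg x).const_mul s),
        deriv_const_mul 2 (differentiableAt_pow 2), deriv_const_mul s (hdiffg x)]
      have h1 := gtanh_deriv_bound h x
      have h2 : deriv (fun b : ℝ => b ^ 2) x = 2 * x := by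
        simpa using (hasDerivAt_pow 2 x).deriv
      rw [h2]
      rw [abs_le] at h1
      rw [abs_of_pos hx0] at h1
      rcases hs with rfl | rfl <;> nlinarith [h1.1, h1.2]
  have hmem : b' ∈ Set.Ici (0:ℝ) := hb'
  have hmem2 : b ∈ Set.Ici (0:ℝ) := le_trans hb' hbb
  have k1 := key 1 (Or.inl rfl) hmem hmem2 hbb
  have k2 := key (-1) (Or.inr rfl) hmem hmem2 hbb
  simp only [one_mul, neg_one_mul, neg_mul] at k1 k2
  rw [abs_le]
  constructor <;> nlinarith [k1, k2]


lemma gtanh_even (h b : ℝ) : gtanh h (-b) = gtanh h b := by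
  unfold gtanh
  rw [show -b + h = h - b by ring, show h - -b = b + h by ring]
  ring

lemma gtanh_abs (h b : ℝ) : gtanh h b = gtanh h |b| := by
  rcases abs_cases b with ⟨h1, _⟩ | ⟨h1, _⟩
  · rw [h1]
  · rw [h1, gtanh_even]

lemma gtanh_two_point (h b b' : ℝ) : |gtanh h b - gtanh h b'| ≤ 2 * |b ^ 2 - b' ^ 2| := by
  have main : ∀ c c' : ℝ, |c'| ≤ |c| →
      |gtanh h c - gtanh h c'| ≤ 2 * |c ^ 2 - c' ^ 2| := by
    intro c c' hcc
    have h1 := gtanh_two_point_nonneg h (abs_nonneg c') hcc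
    rw [gtanh_abs h c, gtanh_abs h c']
    refine h1.trans ?_
    have h2 : c' ^ 2 ≤ c ^ 2 := by
      rw [← sq_abs c, ← sq_abs c']
      exact pow_le_pow_left₀ (abs_nonneg c') hcc 2
    rw [sq_abs, sq_abs]
    have := le_abs_self (c ^ 2 - c' ^ 2)
    linarith
  rcases le_total |b'| |b| with hc | hc
  · exact main b b' hc
  · rw [abs_sub_comm, abs_sub_comm (b ^ 2)]
    exact main b' b hc


lemma gaussian_density_eq :
    gaussianReal 0 1 = volume.withDensity
      (fun x => ((Real.toNNReal (gaussianPDFReal 0 1 x) : ℝ≥0) : ℝ≥0∞)) := by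
  rw [gaussianReal_of_var_ne_zero 0 one_ne_zero]
  congr 1

lemma integral_gaussianReal_eq (g : ℝ → ℝ) :
    ∫ x, g x ∂(gaussianReal 0 1) = ∫ x, gaussianPDFReal 0 1 x * g x := by
  rw [gaussian_density_eq,
    integral_withDensity_eq_integral_smul ((measurable_gaussianPDFReal 0 1).real_toNNReal) g]
  congr 1
  funext x
  rw [NNReal.smul_def, smul_eq_mul, Real.coe_toNNReal _ (gaussianPDFReal_nonneg 0 1 x)]

lemma gaussianPDFReal_zero_one (x : ℝ) :
    gaussianPDFReal 0 1 x = (Real.sqrt (2 * π))⁻¹ * Real.exp (-(1/2) * x ^ 2) := by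
  simp only [gaussianPDFReal, NNReal.coe_one, mul_one, sub_zero]
  ring_nf

lemma integrable_sq_exp : Integrable (fun x : ℝ => x ^ 2 * Real.exp (-(1/2) * x ^ 2)) := by
  have := integrable_rpow_mul_exp_neg_mul_sq (b := 1/2) (by norm_num) (s := 2) (by norm_num)
  convert this using 2 with x
  rw [show (2:ℝ) = ((2:ℕ):ℝ) by norm_num, Real.rpow_natCast]

lemma integral_sq_exp_Ioi :
    ∫ x in Set.Ioi (0:ℝ), x ^ 2 * Real.exp (-(1/2) * x ^ 2) = Real.sqrt (2 * π) / 2 := by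
  have h := integral_rpow_mul_exp_neg_mul_rpow (p := 2) (q := 2) (b := 1/2)
    (by norm_num) (by norm_num) (by norm_num)
  have heq : ∀ x ∈ Set.Ioi (0:ℝ), x ^ (2:ℝ) * Real.exp (-(1/2) * x ^ (2:ℝ))
      = x ^ 2 * Real.exp (-(1/2) * x ^ 2) := by
    intro x hx
    rw [show (2:ℝ) = ((2:ℕ):ℝ) by norm_num, Real.rpow_natCast]
  rw [setIntegral_congr_fun measurableSet_Ioi heq] at h
  rw [h]
  have hG : Real.Gamma ((2 + 1) / 2) = Real.sqrt π / 2 := by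
    rw [show ((2:ℝ) + 1) / 2 = 1/2 + 1 by norm_num, Real.Gamma_add_one (by norm_num),
      Real.Gamma_one_half_eq]
    ring
  rw [hG]
  have h2 : ((1:ℝ)/2) ^ (-((2:ℝ) + 1) / 2) = 2 * Real.sqrt 2 := by
    rw [show (-((2:ℝ) + 1) / 2) = -(3/2) by norm_num, one_div,
      Real.inv_rpow (by norm_num), ← Real.rpow_neg (by norm_num), neg_neg,
      show (3:ℝ)/2 = 1 + 1/2 by norm_num, Real.rpow_add (by norm_num), Real.rpow_one,
      ← Real.sqrt_eq_rpow]
  rw [h2]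
  rw [Real.sqrt_mul (by norm_num) π]
  field_simp


lemma integral_sq_gaussian : ∫ y, y ^ 2 ∂(gaussianReal 0 1) = 1 := by
  rw [integral_gaussianReal_eq]
  have heq : ∀ x : ℝ, gaussianPDFReal 0 1 x * x ^ 2
      = (Real.sqrt (2 * π))⁻¹ * (x ^ 2 * Real.exp (-(1/2) * x ^ 2)) := by
    intro x; rw [gaussianPDFReal_zero_one]; ring
  simp_rw [heq]
  rw [integral_const_mul]
  have : ∫ x : ℝ, x ^ 2 * Real.exp (-(1/2) * x ^ 2)
      = 2 * ∫ x in Set.Ioi (0:ℝ), x ^ 2 * Real.exp (-(1/2) * x ^ 2) := by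
    have h := integral_comp_abs (f := fun t : ℝ => t ^ 2 * Real.exp (-(1/2) * t ^ 2))
    simpa [sq_abs] using h
  rw [this, integral_sq_exp_Ioi]
  have hpos : (0:ℝ) < Real.sqrt (2 * π) := Real.sqrt_pos.mpr (by positivity)
  field_simp

lemma integrable_sq_gaussian : Integrable (fun y : ℝ => y ^ 2) (gaussianReal 0 1) := by
  rw [gaussianReal_of_var_ne_zero 0 one_ne_zero]
  rw [integrable_withDensity_iff (measurable_gaussianPDF 0 1)
    (Filter.Eventually.of_forall fun x => ENNReal.ofReal_lt_top)]
  have : (fun x : ℝ => x ^ 2 * (gaussianPDF 0 1 x).toReal)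
      = fun x => (Real.sqrt (2 * π))⁻¹ * (x ^ 2 * Real.exp (-(1/2) * x ^ 2)) := by
    funext x
    rw [gaussianPDF, ENNReal.toReal_ofReal (gaussianPDFReal_nonneg 0 1 x),
      gaussianPDFReal_zero_one]
    ring
  rw [this]
  exact integrable_sq_exp.const_mul _




lemma continuous_tanh' : Continuous Real.tanh := by
  have : Real.tanh = fun x => Real.sinh x / Real.cosh x :=
    funext fun x => Real.tanh_eq_sinh_div_cosh x
  rw [this]
  exact Real.continuous_sinh.div Real.continuous_cosh fun x => (Real.cosh_pos x).ne'

lemma integrable_of_bounded {f : ℝ → ℝ} (hf : Continuous f) {C : ℝ}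
    (hC : ∀ x, |f x| ≤ C) : Integrable f (gaussianReal 0 1) := by
  refine (integrable_const C).mono' hf.aestronglyMeasurable ?_
  exact Filter.Eventually.of_forall fun x => by simpa using hC x

lemma integral_gaussian_neg (f : ℝ → ℝ) (hf : Continuous f) :
    ∫ y, f (-y) ∂(gaussianReal 0 1) = ∫ y, f y ∂(gaussianReal 0 1) := by
  have hmap : Measure.map (fun y : ℝ => -1 * y) (gaussianReal 0 1) = gaussianReal 0 1 := by
    have h := gaussianReal_map_const_mul (μ := 0) (v := 1) (-1)
    simpa using h
  conv_rhs => rw [← hmap]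
  rw [integral_map (measurable_const_mul (-1)).aemeasurable hf.aestronglyMeasurable]
  simp

lemma continuous_tanh_sq (a h : ℝ) : Continuous fun y : ℝ => Real.tanh (a * y + h) ^ 2 :=
  (continuous_tanh'.comp ((continuous_const.mul continuous_id).add continuous_const)).pow 2

lemma tanh_sq_abs_le (x : ℝ) : |Real.tanh x ^ 2| ≤ 1 := by
  rw [abs_of_nonneg (sq_nonneg _)]
  exact (my_tanh_sq_lt_one x).le

lemma integral_eq_half_gtanh (a h : ℝ) :
    ∫ y, Real.tanh (a * y + h) ^ 2 ∂(gaussianReal 0 1)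
      = (1/2) * ∫ y, gtanh h (a * y) ∂(gaussianReal 0 1) := by
  have h1 : Integrable (fun y : ℝ => Real.tanh (a * y + h) ^ 2) (gaussianReal 0 1) :=
    integrable_of_bounded (continuous_tanh_sq a h) (fun x => tanh_sq_abs_le _)
  have h2 : Integrable (fun y : ℝ => Real.tanh (h - a * y) ^ 2) (gaussianReal 0 1) := by
    refine integrable_of_bounded ?_ (fun x => tanh_sq_abs_le _)
    exact (continuous_tanh'.comp (continuous_const.sub (continuous_const.mul continuous_id))).pow 2
  have hsym : ∫ y, Real.tanh (h - a * y) ^ 2 ∂(gaussianReal 0 1)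
      = ∫ y, Real.tanh (a * y + h) ^ 2 ∂(gaussianReal 0 1) := by
    have := integral_gaussian_neg (fun y => Real.tanh (a * y + h) ^ 2) (continuous_tanh_sq a h)
    rw [← this]
    congr 1
    funext y
    show Real.tanh (h - a * y) ^ 2 = Real.tanh (a * -y + h) ^ 2
    rw [show a * -y + h = h - a * y by ring]
  have : ∫ y, gtanh h (a * y) ∂(gaussianReal 0 1)
      = (∫ y, Real.tanh (a * y + h) ^ 2 ∂(gaussianReal 0 1))
        + ∫ y, Real.tanh (h - a * y) ^ 2 ∂(gaussianReal 0 1) := by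
    rw [← integral_add h1 h2]
    rfl
  rw [this, hsym]
  ring

lemma key_lip (h a a' : ℝ) :
    |(∫ y, Real.tanh (a * y + h) ^ 2 ∂(gaussianReal 0 1))
      - ∫ y, Real.tanh (a' * y + h) ^ 2 ∂(gaussianReal 0 1)| ≤ |a ^ 2 - a' ^ 2| := by
  set γ := gaussianReal 0 1
  have hgb : ∀ b, |gtanh h b| ≤ 2 := by
    intro b
    have := tanh_sq_abs_le (b + h)
    have := tanh_sq_abs_le (h - b)
    rw [gtanh]
    calc |Real.tanh (b + h) ^ 2 + Real.tanh (h - b) ^ 2|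
        ≤ |Real.tanh (b + h) ^ 2| + |Real.tanh (h - b) ^ 2| := abs_add_le _ _
      _ ≤ 2 := by linarith [tanh_sq_abs_le (b + h), tanh_sq_abs_le (h - b)]
  have hcont : ∀ c : ℝ, Continuous fun y : ℝ => gtanh h (c * y) := by
    intro c
    unfold gtanh
    exact ((continuous_tanh'.comp (((continuous_const.mul continuous_id)).add
      continuous_const)).pow 2).add ((continuous_tanh'.comp
      (continuous_const.sub (continuous_const.mul continuous_id))).pow 2)
  have hint : ∀ c : ℝ, Integrable (fun y : ℝ => gtanh h (c * y)) γ :=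
    fun c => integrable_of_bounded (hcont c) (fun x => hgb _)
  rw [integral_eq_half_gtanh a h, integral_eq_half_gtanh a' h]
  rw [← mul_sub, ← integral_sub (hint a) (hint a'), abs_mul]
  have hptwise : ∀ y : ℝ, |gtanh h (a * y) - gtanh h (a' * y)|
      ≤ 2 * |a ^ 2 - a' ^ 2| * y ^ 2 := by
    intro y
    calc |gtanh h (a * y) - gtanh h (a' * y)| ≤ 2 * |(a * y) ^ 2 - (a' * y) ^ 2| :=
        gtanh_two_point h _ _
      _ = 2 * |a ^ 2 - a' ^ 2| * y ^ 2 := by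
        rw [show (a * y) ^ 2 - (a' * y) ^ 2 = (a ^ 2 - a' ^ 2) * y ^ 2 by ring, abs_mul,
          abs_of_nonneg (sq_nonneg y)]
        ring
  have hbound : |∫ y, (gtanh h (a * y) - gtanh h (a' * y)) ∂γ| ≤ 2 * |a ^ 2 - a' ^ 2| := by
    calc |∫ y, (gtanh h (a * y) - gtanh h (a' * y)) ∂γ|
        ≤ ∫ y, |gtanh h (a * y) - gtanh h (a' * y)| ∂γ := by
          simpa [Real.norm_eq_abs] using
            norm_integral_le_integral_norm (fun y => gtanh h (a * y) - gtanh h (a' * y)) (μ := γ)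
      _ ≤ ∫ y, 2 * |a ^ 2 - a' ^ 2| * y ^ 2 ∂γ := by
          refine integral_mono ((hint a).sub (hint a')).abs
            ((integrable_sq_gaussian.const_mul _)) hptwise
      _ = 2 * |a ^ 2 - a' ^ 2| := by
          rw [integral_const_mul, integral_sq_gaussian, mul_one]
  calc |(1:ℝ)/2| * |∫ y, (gtanh h (a * y) - gtanh h (a' * y)) ∂γ|
      ≤ (1/2) * (2 * |a ^ 2 - a' ^ 2|) := by
        rw [abs_of_nonneg (by norm_num : (0:ℝ) ≤ 1/2)]
        linarith [hbound, abs_nonneg (∫ y, (gtanh h (a * y) - gtanh h (a' * y)) ∂γ)]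
    _ = |a ^ 2 - a' ^ 2| := by ring


lemma pow_lip {x y : ℝ} (hx : x ∈ Set.Icc (0:ℝ) 1) (hy : y ∈ Set.Icc (0:ℝ) 1) (n : ℕ) :
    |x ^ n - y ^ n| ≤ n * |x - y| := by
  induction n with
  | zero => simp
  | succ n ih =>
    have hx1 : |x| ≤ 1 := abs_le.mpr ⟨by linarith [hx.1], hx.2⟩
    have hyn : |y ^ n| ≤ 1 := by
      rw [abs_pow]
      exact pow_le_one₀ (abs_nonneg y) (abs_le.mpr ⟨by linarith [hy.1], hy.2⟩)
    calc |x ^ (n + 1) - y ^ (n + 1)| = |x * (x ^ n - y ^ n) + (x - y) * y ^ n| := by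
          congr 1; ring
      _ ≤ |x * (x ^ n - y ^ n)| + |(x - y) * y ^ n| := abs_add_le _ _
      _ = |x| * |x ^ n - y ^ n| + |x - y| * |y ^ n| := by rw [abs_mul, abs_mul]
      _ ≤ 1 * (n * |x - y|) + |x - y| * 1 := by
          refine add_le_add ?_ ?_
          · exact mul_le_mul hx1 ih (abs_nonneg _) zero_le_one
          · exact mul_le_mul_of_nonneg_left hyn (abs_nonneg _)
      _ = (n + 1 : ℕ) * |x - y| := by push_cast; ring

theorem stmt_5 (p : ℕ) (hp : 2 ≤ p) (β h : ℝ) (hβ : 0 < β) (hh : 0 < h)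
    (hH : β ^ 2 * p * ((p : ℝ) - 1) / 2 < 1) :
    ∃! q : ℝ, q ∈ Set.Icc (0 : ℝ) 1 ∧
      q = ∫ y, Real.tanh (β * Real.sqrt ((p : ℝ) / 2) * q ^ (((p : ℝ) - 1) / 2) * y + h) ^ 2
            ∂(gaussianReal 0 1) := by
  set γ := gaussianReal 0 1
  set s : ℝ := ((p : ℝ) - 1) / 2 with hs
  set A : ℝ → ℝ := fun q => β * Real.sqrt ((p : ℝ) / 2) * q ^ s with hA
  set Φ : ℝ → ℝ := fun q => ∫ y, Real.tanh (A q * y + h) ^ 2 ∂γ with hΦ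
  set K : ℝ := β ^ 2 * p * ((p : ℝ) - 1) / 2 with hK
  have hp1 : (1:ℝ) ≤ (p:ℝ) - 1 := by
    have : (2:ℝ) ≤ (p:ℝ) := by exact_mod_cast hp
    linarith
  have hK0 : 0 ≤ K := by
    have : (0:ℝ) ≤ (p:ℝ) - 1 := by linarith
    positivity
  -- A squared
  have hcast : ((p - 1 : ℕ) : ℝ) = (p : ℝ) - 1 := by
    have : 1 ≤ p := by omega
    push_cast [this]
    ring
  have hAsq : ∀ q ∈ Set.Icc (0:ℝ) 1, (A q) ^ 2 = β ^ 2 * ((p:ℝ)/2) * q ^ (p - 1 : ℕ) := by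
    intro q hq
    have hq0 : (0:ℝ) ≤ q := hq.1
    have h1 : (Real.sqrt ((p:ℝ)/2)) ^ 2 = (p:ℝ)/2 := by
      rw [Real.sq_sqrt]; positivity
    have h2 : (q ^ s) ^ 2 = q ^ (p - 1 : ℕ) := by
      rw [← Real.rpow_natCast (q ^ s) 2, ← Real.rpow_mul hq0]
      rw [show s * ((2:ℕ):ℝ) = ((p - 1 : ℕ) : ℝ) by rw [hcast]; push_cast [hs]; ring]
      rw [Real.rpow_natCast]
    calc (A q) ^ 2 = β ^ 2 * (Real.sqrt ((p:ℝ)/2)) ^ 2 * (q ^ s) ^ 2 := by rw [hA]; ring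
      _ = β ^ 2 * ((p:ℝ)/2) * q ^ (p - 1 : ℕ) := by rw [h1, h2]
  -- Lipschitz estimate
  have hLip : ∀ q ∈ Set.Icc (0:ℝ) 1, ∀ q' ∈ Set.Icc (0:ℝ) 1,
      |Φ q - Φ q'| ≤ K * |q - q'| := by
    intro q hq q' hq'
    have h1 := key_lip h (A q) (A q')
    refine h1.trans ?_
    rw [hAsq q hq, hAsq q' hq']
    have h2 : β ^ 2 * ((p:ℝ)/2) * q ^ (p - 1 : ℕ) - β ^ 2 * ((p:ℝ)/2) * q' ^ (p - 1 : ℕ)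
        = β ^ 2 * ((p:ℝ)/2) * (q ^ (p - 1 : ℕ) - q' ^ (p - 1 : ℕ)) := by ring
    rw [h2, abs_mul, abs_of_nonneg (by positivity : (0:ℝ) ≤ β ^ 2 * ((p:ℝ)/2))]
    have h3 := pow_lip hq hq' (p - 1)
    rw [hcast] at h3
    calc β ^ 2 * ((p:ℝ)/2) * |q ^ (p - 1 : ℕ) - q' ^ (p - 1 : ℕ)|
        ≤ β ^ 2 * ((p:ℝ)/2) * (((p:ℝ) - 1) * |q - q'|) := by
          refine mul_le_mul_of_nonneg_left h3 (by positivity)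
      _ = K * |q - q'| := by rw [hK]; ring
  -- Φ maps [0,1] to [0,1]
  have hΦint : ∀ q : ℝ, Integrable (fun y => Real.tanh (A q * y + h) ^ 2) γ :=
    fun q => integrable_of_bounded (continuous_tanh_sq (A q) h) (fun x => tanh_sq_abs_le _)
  have hΦ0 : ∀ q : ℝ, 0 ≤ Φ q := fun q => integral_nonneg fun y => sq_nonneg _
  have hΦ1 : ∀ q : ℝ, Φ q ≤ 1 := by
    intro q
    have : Φ q ≤ ∫ _, (1:ℝ) ∂γ := by
      refine integral_mono (hΦint q) (integrable_const 1) ?_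
      intro y
      exact (my_tanh_sq_lt_one _).le
    simpa using this
  -- continuity
  have hcont : ContinuousOn Φ (Set.Icc 0 1) := by
    refine LipschitzOnWith.continuousOn (K := K.toNNReal) ?_
    intro q hq q' hq'
    rw [edist_dist, edist_dist, dist_eq_norm, dist_eq_norm]
    rw [← ENNReal.ofReal_coe_nnreal]
    rw [← ENNReal.ofReal_mul (by positivity)]
    refine ENNReal.ofReal_le_ofReal ?_
    have := hLip q hq q' hq'
    simp only [Real.norm_eq_abs]
    calc |Φ q - Φ q'| ≤ K * |q - q'| := this
      _ ≤ (K.toNNReal : ℝ) * |q - q'| := by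
          refine mul_le_mul_of_nonneg_right ?_ (abs_nonneg _)
          rw [Real.coe_toNNReal _ hK0]
  -- existence via IVT
  have hFcont : ContinuousOn (fun q => Φ q - q) (Set.Icc 0 1) :=
    hcont.sub continuousOn_id
  have hiv := intermediate_value_Icc' (by norm_num : (0:ℝ) ≤ 1) hFcont
  have h0mem : (0:ℝ) ∈ Set.Icc (Φ 1 - 1) (Φ 0 - 0) := by
    constructor
    · linarith [hΦ1 1]
    · simpa using hΦ0 0
  obtain ⟨q, hqmem, hq⟩ := hiv h0mem
  have hqfix : q = Φ q := by
    have : Φ q - q = 0 := hq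
    linarith
  refine ⟨q, ⟨hqmem, hqfix⟩, ?_⟩
  rintro q' ⟨hq'mem, hq'fix⟩
  by_contra hne
  have habs : 0 < |q' - q| := by
    rw [abs_pos]
    intro hz
    exact hne (by linarith [sub_eq_zero.mp hz])
  have := hLip q' hq'mem q hqmem
  have hq'fix2 : q' = Φ q' := by simp only [hΦ, hA, hs]; exact hq'fix
  rw [← hq'fix2, ← hqfix] at this
  nlinarith [this, habs, hH]
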